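/- Let X ⊆ ℙ(ℂ^{d+1}) be a σ-invariant subset and V ⊆ ℂ^{d+1} a real ℂ-subspace of dimension ℓ ≥ 1 with ℙ(V) ∩ X = ∅. Then X is hyperbolic with respect to V if and only if the following Schubert-cycle condition holds: for every real subspace V_0 ⊆ V with dim V_0 = ℓ−1 and every real subspace U ⊇ V with dim U = ℓ+1, every ℂ-subspace V' of ℂ^{d+1} with V_0 ⊆ V' ⊆ U, dim V' = ℓ, and ℙ(V') ∩ X ≠ ∅ satisfies σ(V') = V' (i.e., V' is real). (Proposition 3.5: X is hyperbolic with respect to V if and only if every real one-dimensional Schubert cycle through V meets the associated hypersurface Y only in real points.) -/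

import Mathlib

/-!
Points of `ℙ(ℂ^{d+1})` are modelled by their nonzero representative vectors, and subsets of
`ℙ(ℂ^{d+1})` by their cones: sets of nonzero vectors stable under multiplication by nonzero
scalars. `σ` is coordinatewise complex conjugation; a point `[x]` is real iff `σ(x)` is a
scalar multiple of `x`, and a `ℂ`-subspace `W` is real iff `σ(W) = W` (equivalently, `σ`
maps `W` into `W`, `σ` being an involution). `ℂ^{d+1}` carries the standard Hermitian inner
product (`EuclideanSpace`).
-/

noncomputable section

/-- `ℂ^{d+1}` with the standard Hermitian inner product. -/
abbrev EE (d : ℕ) : Type := EuclideanSpace ℂ (Fin (d + 1))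

/-- Coordinatewise complex conjugation `σ`. -/
def conjE {d : ℕ} (x : EE d) : EE d := WithLp.toLp 2 (fun i => (starRingEnd ℂ) (x i))

/-- `x` represents a real point of projective space: `σ(x)` is proportional to `x`. -/
def IsRealPt {d : ℕ} (x : EE d) : Prop := ∃ c : ℂ, conjE x = c • x

/-- A real (σ-invariant) `ℂ`-subspace. -/
def IsRealSub {d : ℕ} (V : Submodule ℂ (EE d)) : Prop := ∀ x ∈ V, conjE x ∈ V

/-- `X` is the cone over a subset of projective space: `0 ∉ X` and `X` is stable under
multiplication by nonzero scalars. -/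
def IsProjCone {d : ℕ} (X : Set (EE d)) : Prop :=
  (0 : EE d) ∉ X ∧ ∀ x ∈ X, ∀ c : ℂ, c ≠ 0 → c • x ∈ X

/-- `X` is σ-invariant. -/
def IsSigmaInv {d : ℕ} (X : Set (EE d)) : Prop := ∀ x ∈ X, conjE x ∈ X

/-- The projection from `ℙ(V₀)`: orthogonal projection onto `V₀ᗮ` (on cones). -/
def projPerp {d : ℕ} (V₀ : Submodule ℂ (EE d)) (x : EE d) : EE d :=
  (V₀ᗮ.orthogonalProjectionOnto x : EE d)

/-- `X` (a cone over a subset of `ℙ(W)`) is hyperbolic, within the ambient subspace `W`,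
with respect to the real subspace `V ≤ W`: `ℙ(V) ∩ X = ∅` and for every real subspace
`U` with `V ≤ U ≤ W` and `dim U = dim V + 1`, every point of `X ∩ ℙ(U)` is real. -/
def HyperbolicIn {d : ℕ} (W : Submodule ℂ (EE d)) (X : Set (EE d))
    (V : Submodule ℂ (EE d)) : Prop :=
  (∀ x ∈ X, x ∉ V) ∧
    ∀ U : Submodule ℂ (EE d), U ≤ W → V ≤ U →
      Module.finrank ℂ U = Module.finrank ℂ V + 1 →
      IsRealSub U → ∀ x ∈ X, x ∈ U → IsRealPt x

/-- Hyperbolicity in the full ambient space `ℙ(ℂ^{d+1})`. -/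
def Hyperbolic {d : ℕ} (X : Set (EE d)) (V : Submodule ℂ (EE d)) : Prop :=
  HyperbolicIn ⊤ X V

/-!
STATEMENT 11 (Proposition 3.5). Let `X ⊆ ℙ(ℂ^{d+1})` be σ-invariant and `V` real of
dimension `ℓ ≥ 1` with `ℙ(V) ∩ X = ∅`. Then `X` is hyperbolic with respect to `V` iff:
for every real subspace `V₀ ⊆ V` with `dim V₀ = ℓ−1` and every real subspace `U ⊇ V`
with `dim U = ℓ+1`, every `ℂ`-subspace `V'` with `V₀ ⊆ V' ⊆ U`, `dim V' = ℓ` and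
`ℙ(V') ∩ X ≠ ∅` is real.
-/

lemma conjE_add {d : ℕ} (x y : EE d) : conjE (x + y) = conjE x + conjE y := by
  ext i; simp [conjE]

lemma conjE_sub {d : ℕ} (x y : EE d) : conjE (x - y) = conjE x - conjE y := by
  ext i; simp [conjE]

lemma conjE_smul {d : ℕ} (c : ℂ) (x : EE d) :
    conjE (c • x) = (starRingEnd ℂ) c • conjE x := by
  ext i; simp [conjE]

lemma conjE_conjE {d : ℕ} (x : EE d) : conjE (conjE x) = x := by
  ext i; simp [conjE]

lemma inner_conjE {d : ℕ} (a x : EE d) (ha : conjE a = a) :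
    (inner ℂ a (conjE x) : ℂ) = (starRingEnd ℂ) (inner ℂ a x : ℂ) := by
  have ha' : ∀ i, (starRingEnd ℂ) (a i) = a i := fun i => congrArg (fun v : EE d => v.ofLp i) ha
  simp only [PiLp.inner_apply, RCLike.inner_apply, conjE, map_sum, map_mul]
  refine Finset.sum_congr rfl fun i _ => ?_
  exact congrArg ((starRingEnd ℂ) (x i) * ·) (congrArg (starRingEnd ℂ) (ha' i)).symm

lemma finrank_sup_span {d : ℕ} (V₀ : Submodule ℂ (EE d)) (x : EE d) (hx : x ∉ V₀) :
    Module.finrank ℂ ↥(V₀ ⊔ (ℂ ∙ x)) = Module.finrank ℂ V₀ + 1 := by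
  have hx0 : x ≠ 0 := fun h => hx (h ▸ V₀.zero_mem)
  have hinf : V₀ ⊓ (ℂ ∙ x) = ⊥ := by
    rw [eq_bot_iff]
    rintro y ⟨hy1, hy2⟩
    obtain ⟨c, rfl⟩ := Submodule.mem_span_singleton.1 hy2
    rcases eq_or_ne c 0 with rfl | hc
    · simp
    · exact absurd (by simpa [smul_smul, inv_mul_cancel₀ hc] using V₀.smul_mem c⁻¹ hy1) hx
  have h := Submodule.finrank_sup_add_finrank_inf_eq V₀ (ℂ ∙ x)
  rw [hinf, finrank_span_singleton hx0] at h
  simpa using h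

/-- Given a real subspace `V` of dimension `ℓ ≥ 1` and a nonzero `w ∈ V`, there is a
real hyperplane of `V` avoiding `w`. -/
lemma exists_real_hyperplane {d ℓ : ℕ} (hℓ : 1 ≤ ℓ) (V : Submodule ℂ (EE d))
    (hVreal : IsRealSub V) (hVdim : Module.finrank ℂ V = ℓ)
    (w : EE d) (hwV : w ∈ V) (hw : w ≠ 0) :
    ∃ V₀ : Submodule ℂ (EE d), V₀ ≤ V ∧ IsRealSub V₀ ∧
      Module.finrank ℂ V₀ = ℓ - 1 ∧ w ∉ V₀ := by
  -- decompose w into real and imaginary σ-fixed parts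
  obtain ⟨w₁, w₂, hw₁V, hw₂V, hw₁σ, hw₂σ, hsum⟩ :
      ∃ w₁ w₂ : EE d, w₁ ∈ V ∧ w₂ ∈ V ∧ conjE w₁ = w₁ ∧ conjE w₂ = w₂ ∧
        w = w₁ + Complex.I • w₂ := by
    have hcw : conjE w ∈ V := hVreal w hwV
    refine ⟨(2:ℂ)⁻¹ • (w + conjE w), (2 * Complex.I)⁻¹ • (w - conjE w),
      V.smul_mem _ (V.add_mem hwV hcw), V.smul_mem _ (V.sub_mem hwV hcw), ?_, ?_, ?_⟩
    · rw [conjE_smul, conjE_add, conjE_conjE]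
      simp [add_comm, Complex.conj_ofNat]
    · rw [conjE_smul, conjE_sub, conjE_conjE]
      rw [show (starRingEnd ℂ) (2 * Complex.I)⁻¹ = -(2 * Complex.I)⁻¹ by
        rw [map_inv₀, map_mul, Complex.conj_I, Complex.conj_ofNat, mul_neg, inv_neg]]
      rw [neg_smul, ← smul_neg, neg_sub]
    · rw [smul_smul]
      rw [show Complex.I * (2 * Complex.I)⁻¹ = (2:ℂ)⁻¹ by
        field_simp [Complex.I_ne_zero]]
      rw [← smul_add]
      have h2 : w + conjE w + (w - conjE w) = (2:ℂ) • w := by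
        rw [two_smul]; abel
      rw [h2, smul_smul, inv_mul_cancel₀ (two_ne_zero), one_smul]
  -- choose a σ-fixed s ∈ V with ⟪s, w⟫ ≠ 0
  obtain ⟨s, hsV, hsσ, hs0, hsw⟩ :
      ∃ s : EE d, s ∈ V ∧ conjE s = s ∧ s ≠ 0 ∧ (inner ℂ s w : ℂ) ≠ 0 := by
    by_cases h1 : w₁ = 0
    · have hw₂0 : w₂ ≠ 0 := by
        intro h2; apply hw; rw [hsum, h1, h2, smul_zero, add_zero]
      refine ⟨w₂, hw₂V, hw₂σ, hw₂0, ?_⟩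
      rw [hsum, h1, zero_add, inner_smul_right]
      simp only [ne_eq, mul_eq_zero, Complex.I_ne_zero, false_or]
      rw [inner_self_eq_zero]
      exact fun h => hw₂0 (by exact_mod_cast h)
    · refine ⟨w₁, hw₁V, hw₁σ, h1, ?_⟩
      rw [hsum, inner_add_right, inner_smul_right]
      -- real part is ‖w₁‖² ≠ 0
      have him : (inner ℂ w₁ w₂ : ℂ).im = 0 := by
        have := inner_conjE w₁ w₂ hw₁σ
        rw [hw₂σ] at this
        exact Complex.conj_eq_iff_im.1 this.symm
      have hre : (inner ℂ w₁ w₁ : ℂ).im = 0 := by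
        have := inner_conjE w₁ w₁ hw₁σ
        rw [hw₁σ] at this
        exact Complex.conj_eq_iff_im.1 this.symm
      intro hz
      have hre0 : (inner ℂ w₁ w₁ : ℂ).re = 0 := by
        have h' := congrArg Complex.re hz
        rw [Complex.add_re, Complex.mul_re, Complex.I_re, Complex.I_im, him,
          Complex.zero_re] at h'
        linarith
      apply h1
      rw [← inner_self_eq_zero (𝕜 := ℂ) (x := w₁)]
      exact Complex.ext (by simpa using hre0) (by simpa using hre)
  -- take V₀ = (ℂ ∙ s)ᗮ ⊓ V
  refine ⟨(ℂ ∙ s)ᗮ ⊓ V, inf_le_right, ?_, ?_, ?_⟩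
  · intro x hx
    obtain ⟨hx1, hx2⟩ := Submodule.mem_inf.1 hx
    refine Submodule.mem_inf.2 ⟨?_, hVreal x hx2⟩
    rw [Submodule.mem_orthogonal_singleton_iff_inner_right] at hx1 ⊢
    rw [inner_conjE s x hsσ, hx1, map_zero]
  · refine Submodule.finrank_add_inf_finrank_orthogonal'
      (Submodule.span_le.2 (Set.singleton_subset_iff.2 hsV)) ?_
    rw [finrank_span_singleton hs0, hVdim]
    omega
  · intro hx
    obtain ⟨hx1, _⟩ := Submodule.mem_inf.1 hx
    rw [Submodule.mem_orthogonal_singleton_iff_inner_right] at hx1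
    exact hsw hx1
theorem stmt11 (d ℓ : ℕ) (hℓ1 : 1 ≤ ℓ) (hℓ2 : ℓ ≤ d)
    (X : Set (EE d)) (hXcone : IsProjCone X) (hXσ : IsSigmaInv X)
    (V : Submodule ℂ (EE d)) (hVreal : IsRealSub V)
    (hVdim : Module.finrank ℂ V = ℓ)
    (hdisj : ∀ x ∈ X, x ∉ V) :
    Hyperbolic X V ↔
      ∀ V₀ : Submodule ℂ (EE d), V₀ ≤ V → IsRealSub V₀ →
        Module.finrank ℂ V₀ = ℓ - 1 →
      ∀ U : Submodule ℂ (EE d), V ≤ U → IsRealSub U →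
        Module.finrank ℂ U = ℓ + 1 →
      ∀ V' : Submodule ℂ (EE d), V₀ ≤ V' → V' ≤ U →
        Module.finrank ℂ V' = ℓ →
        (∃ x ∈ X, x ∈ V') → IsRealSub V' := by
  constructor
  · -- forward
    intro hyp V₀ hV₀V hV₀real hV₀dim U hVU hUreal hUdim V' hV₀V' hV'U hV'dim ⟨x, hxX, hxV'⟩
    have hxU : x ∈ U := hV'U hxV'
    obtain ⟨c, hc⟩ : IsRealPt x :=
      hyp.2 U le_top hVU (by rw [hUdim, hVdim]) hUreal x hxX hxU
    have hxV₀ : x ∉ V₀ := fun h => hdisj x hxX (hV₀V h)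
    have hle : V₀ ⊔ (ℂ ∙ x) ≤ V' :=
      sup_le hV₀V' ((Submodule.span_singleton_le_iff_mem _ _).2 hxV')
    have heq : V₀ ⊔ (ℂ ∙ x) = V' := by
      refine Submodule.eq_of_le_of_finrank_eq hle ?_
      rw [finrank_sup_span _ _ hxV₀, hV₀dim, hV'dim]
      omega
    intro y hy
    rw [← heq] at hy ⊢
    obtain ⟨v, hv, z, hz, rfl⟩ := Submodule.mem_sup.1 hy
    obtain ⟨a, rfl⟩ := Submodule.mem_span_singleton.1 hz
    rw [conjE_add, conjE_smul, hc, smul_smul]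
    exact Submodule.add_mem _ (Submodule.mem_sup_left (hV₀real v hv))
      (Submodule.mem_sup_right (Submodule.smul_mem _ _
        (Submodule.mem_span_singleton_self x)))
  · -- backward
    intro hcond
    refine ⟨hdisj, ?_⟩
    intro U _ hVU hUdim' hUreal x hxX hxU
    rw [hVdim] at hUdim'
    have hxV : x ∉ V := hdisj x hxX
    have key : ∀ V₀ : Submodule ℂ (EE d), V₀ ≤ V → IsRealSub V₀ →
        Module.finrank ℂ V₀ = ℓ - 1 → ∃ v ∈ V₀, ∃ a : ℂ, conjE x = v + a • x := by
      intro V₀ h1 h2 h3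
      have hxV₀ : x ∉ V₀ := fun h => hxV (h1 h)
      have hxmem : x ∈ V₀ ⊔ (ℂ ∙ x) :=
        Submodule.mem_sup_right (Submodule.mem_span_singleton_self x)
      have hreal : IsRealSub (V₀ ⊔ (ℂ ∙ x)) := by
        refine hcond V₀ h1 h2 h3 U hVU hUreal hUdim' _ le_sup_left
          (sup_le (le_trans h1 hVU)
            ((Submodule.span_singleton_le_iff_mem _ _).2 hxU)) ?_ ⟨x, hxX, hxmem⟩
        rw [finrank_sup_span _ _ hxV₀, h3]
        omega
      obtain ⟨v, hv, z, hz, hvz⟩ := Submodule.mem_sup.1 (hreal x hxmem)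
      obtain ⟨a, rfl⟩ := Submodule.mem_span_singleton.1 hz
      exact ⟨v, hv, a, hvz.symm⟩
    -- get one real hyperplane
    obtain ⟨u, huV, hu0⟩ : ∃ u ∈ V, u ≠ (0 : EE d) := by
      by_contra h
      push_neg at h
      have : V = ⊥ := by
        rw [eq_bot_iff]; intro y hy; exact (Submodule.mem_bot _).2 (h y hy)
      rw [this, finrank_bot] at hVdim
      omega
    obtain ⟨V₀, hV₀V, hV₀real, hV₀dim, -⟩ :=
      exists_real_hyperplane hℓ1 V hVreal hVdim u huV hu0
    obtain ⟨v, hv, a, hva⟩ := key V₀ hV₀V hV₀real hV₀dim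
    by_cases hvz : v = 0
    · exact ⟨a, by rw [hva, hvz, zero_add]⟩
    · obtain ⟨V₀', hV₀'V, hV₀'real, hV₀'dim, hvn⟩ :=
        exists_real_hyperplane hℓ1 V hVreal hVdim v (hV₀V hv) hvz
      obtain ⟨v', hv', a', hva'⟩ := key V₀' hV₀'V hV₀'real hV₀'dim
      have hsub : v - v' = (a' - a) • x := by
        have := hva.symm.trans hva'
        rw [sub_smul]
        rw [show v = conjE x - a • x by rw [hva]; abel,
          show v' = conjE x - a' • x by rw [hva']; abel]
        abel
      by_cases haa : a = a'
      · exfalso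
        apply hvn
        have : v = v' := by
          have h0 : v - v' = 0 := by rw [hsub, haa, sub_self, zero_smul]
          linear_combination (norm := module) h0
        rw [this]; exact hv'
      · exfalso
        apply hxV
        have hne : a' - a ≠ 0 := sub_ne_zero.2 (Ne.symm haa)
        have : x = (a' - a)⁻¹ • (v - v') := by
          rw [hsub, smul_smul, inv_mul_cancel₀ hne, one_smul]
        rw [this]
        exact V.smul_mem _ (V.sub_mem (hV₀V hv) (hV₀'V hv'))
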